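/- arXiv:1502.05133 — 7 statements merged into one kernel-verified Lean document; each statement's English description precedes it below -/
import Mathlib

section
/- Let 𝕜 be a complete nontrivially normed field which is locally compact (i.e. a proper metric space), let n ≥ 1, and let t be an n×n matrix over 𝕜 with trace 0. Suppose (h_α)_{α∈ℕ} is a sequence in SL_n(𝕜) such that ‖h_α t h_α⁻¹‖ → ∞ as α → ∞. Then there exist a strictly increasing sequence of indices (α_j), a sequence (λ_j) in 𝕜 with λ_j → 0, and a nonzero nilpotent n×n matrix v over 𝕜 (i.e. v ≠ 0 and v^n = 0) such that h_{α_j} (λ_j t) h_{α_j}⁻¹ → v as j → ∞. -/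
open Filter Topology Matrix Polynomial

attribute [local instance] Matrix.normedAddCommGroup
attribute [local instance] Matrix.normedSpace

private lemma L92_coeff_aeval_C_mul_X {R : Type*} [CommRing R] (c : R) (p : R[X]) (k : ℕ) :
    (Polynomial.aeval (Polynomial.C c * Polynomial.X) p).coeff k = p.coeff k * c ^ k := by
  induction p using Polynomial.induction_on' with
  | add p q hp hq => simp [hp, hq, add_mul]
  | monomial i a =>
      rw [aeval_monomial, mul_pow, ← Polynomial.C_pow,
        show (algebraMap R R[X]) a = Polynomial.C a from rfl, ← mul_assoc,
        ← Polynomial.C_mul, Polynomial.coeff_C_mul, Polynomial.coeff_X_pow,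
        Polynomial.coeff_monomial]
      by_cases hik : i = k
      · subst hik; simp
      · simp [hik, Ne.symm hik]

private lemma L92_charpoly_smul_coeff {𝕜 : Type*} [Field 𝕜] {n : ℕ} {c : 𝕜} (hc : c ≠ 0)
    (M : Matrix (Fin n) (Fin n) 𝕜) (k : ℕ) (hk : k ≤ n) :
    (c • M).charpoly.coeff k = c ^ (n - k) * M.charpoly.coeff k := by
  classical
  have key : Polynomial.aeval (Polynomial.C c * Polynomial.X) ((c • M).charpoly)
      = Polynomial.C (c ^ n) * M.charpoly := by
    have hmap : (charmatrix (c • M)).map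
        (⇑(Polynomial.aeval (Polynomial.C c * Polynomial.X) : 𝕜[X] →ₐ[𝕜] 𝕜[X]))
        = Polynomial.C c • charmatrix M := by
      apply Matrix.ext
      intro i j
      by_cases hij : i = j
      · subst hij
        simp only [Matrix.map_apply, charmatrix_apply_eq, Matrix.smul_apply, map_sub,
          _root_.map_mul, Polynomial.aeval_X, Polynomial.aeval_C, Polynomial.algebraMap_eq,
          smul_eq_mul, Polynomial.C_mul]
        ring
      · simp only [Matrix.map_apply, charmatrix_apply_ne _ _ _ hij, Matrix.smul_apply,
          map_neg, smul_eq_mul, Polynomial.C_mul, _root_.map_mul, Polynomial.aeval_C,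
          Polynomial.algebraMap_eq]
        ring
    calc Polynomial.aeval (Polynomial.C c * Polynomial.X) ((c • M).charpoly)
        = ((charmatrix (c • M)).map
            (⇑(Polynomial.aeval (Polynomial.C c * Polynomial.X) : 𝕜[X] →ₐ[𝕜] 𝕜[X]))).det := by
          simp only [Matrix.charpoly]
          exact RingHom.map_det
            (Polynomial.aeval (Polynomial.C c * Polynomial.X) : 𝕜[X] →ₐ[𝕜] 𝕜[X]).toRingHom _
      _ = (Polynomial.C c • charmatrix M).det := by rw [hmap]
      _ = Polynomial.C (c ^ n) * M.charpoly := by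
          rw [Matrix.det_smul, Fintype.card_fin, ← Polynomial.C_pow]
          simp only [Matrix.charpoly]
  have hcoeff := congrArg (fun p => Polynomial.coeff p k) key
  simp only [L92_coeff_aeval_C_mul_X, Polynomial.coeff_C_mul] at hcoeff
  have hck : c ^ k ≠ 0 := pow_ne_zero _ hc
  have : c ^ (n - k) * M.charpoly.coeff k * c ^ k
      = (c • M).charpoly.coeff k * c ^ k := by
    rw [hcoeff, mul_comm (c ^ (n - k)) _, mul_assoc, ← pow_add]
    rw [Nat.sub_add_cancel hk, mul_comm]
  exact (mul_right_cancel₀ hck this).symm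

private lemma L92_conj_pow {𝕜 : Type*} [Field 𝕜] {n : ℕ} (H : Matrix (Fin n) (Fin n) 𝕜)
    (hH : H.det = 1) (A : Matrix (Fin n) (Fin n) 𝕜) (k : ℕ) :
    (H * A * H⁻¹) ^ k = H * A ^ k * H⁻¹ := by
  have hu : IsUnit H.det := hH ▸ isUnit_one
  induction k with
  | zero => simp [Matrix.mul_nonsing_inv H hu]
  | succ k ih =>
      rw [pow_succ, pow_succ, ih]
      calc H * A ^ k * H⁻¹ * (H * A * H⁻¹)
          = H * A ^ k * (H⁻¹ * (H * (A * H⁻¹))) := by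
            simp only [Matrix.mul_assoc]
        _ = H * A ^ k * (A * H⁻¹) := by
            rw [Matrix.nonsing_inv_mul_cancel_left _ _ hu]
        _ = H * (A ^ k * A) * H⁻¹ := by simp only [Matrix.mul_assoc]

private lemma L92_pow_eq_neg_sum {𝕜 : Type*} [Field 𝕜] {n : ℕ}
    (M : Matrix (Fin n) (Fin n) 𝕜) :
    M ^ n = -∑ i ∈ Finset.range n, M.charpoly.coeff i • M ^ i := by
  have h0 := Matrix.aeval_self_charpoly M
  have hdeg : M.charpoly.natDegree = n := by
    rw [Matrix.charpoly_natDegree_eq_dim, Fintype.card_fin]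
  have hlt : M.charpoly.natDegree < n + 1 := by omega
  rw [Polynomial.aeval_eq_sum_range' hlt, Finset.sum_range_succ] at h0
  have hcn : M.charpoly.coeff n = 1 := by
    have hm := M.charpoly_monic
    rw [Polynomial.Monic, Polynomial.leadingCoeff, hdeg] at hm
    exact hm
  rw [hcn, one_smul] at h0
  rw [add_comm] at h0
  exact eq_neg_of_add_eq_zero_left h0

/-- **Lemma 9.2 (first part).** If `t` is a traceless `n × n` matrix over a locally compact
complete nontrivially normed field `𝕜` and `h α` is a sequence of determinant-one matrices
with `‖h α * t * (h α)⁻¹‖ → ∞`, then along a subsequence one can rescale by scalars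
`λ_j → 0` so that the conjugates converge to a nonzero nilpotent matrix `v`. -/
theorem statement0 {𝕜 : Type*} [NontriviallyNormedField 𝕜] [CompleteSpace 𝕜] [ProperSpace 𝕜]
    {n : ℕ} (hn : 1 ≤ n) (t : Matrix (Fin n) (Fin n) 𝕜) (ht : Matrix.trace t = 0)
    (h : ℕ → Matrix (Fin n) (Fin n) 𝕜) (hSL : ∀ α, (h α).det = 1)
    (hdiv : Tendsto (fun α => ‖h α * t * (h α)⁻¹‖) atTop atTop) :
    ∃ (φ : ℕ → ℕ) (lam : ℕ → 𝕜) (v : Matrix (Fin n) (Fin n) 𝕜),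
      StrictMono φ ∧ Tendsto lam atTop (𝓝 0) ∧ v ≠ 0 ∧ v ^ n = 0 ∧
      Tendsto (fun j => h (φ j) * (lam j • t) * (h (φ j))⁻¹) atTop (𝓝 v) := by
  classical
  obtain ⟨c, hc⟩ := NormedField.exists_one_lt_norm 𝕜
  have hc0 : c ≠ 0 := by
    intro h0; rw [h0, norm_zero] at hc; linarith
  set g : ℕ → Matrix (Fin n) (Fin n) 𝕜 := fun α => h α * t * (h α)⁻¹ with hg
  obtain ⟨N, hN⟩ := (tendsto_atTop.mp hdiv 1).exists_forall_of_atTop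
  -- choose exponents
  have hP : ∀ α : ℕ, ∃ m : ℕ, ‖c‖ ^ m ≤ ‖g (α + N)‖ ∧ ‖g (α + N)‖ < ‖c‖ ^ (m + 1) := by
    intro α
    have hr : 1 ≤ ‖g (α + N)‖ := hN (α + N) (Nat.le_add_left N α)
    have hex : ∃ k : ℕ, ‖g (α + N)‖ < ‖c‖ ^ k := pow_unbounded_of_one_lt _ hc
    have hfind := Nat.find_spec hex
    have hK0ne : Nat.find hex ≠ 0 := by
      intro h0
      rw [h0, pow_zero] at hfind; linarith
    refine ⟨Nat.find hex - 1, ?_, ?_⟩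
    · have := Nat.find_min hex (show Nat.find hex - 1 < Nat.find hex by omega)
      linarith [not_lt.mp this]
    · have heq : Nat.find hex - 1 + 1 = Nat.find hex := by omega
      rw [heq]; exact hfind
  choose m hm1 hm2 using hP
  set lam0 : ℕ → 𝕜 := fun α => (c ^ m α)⁻¹ with hlam0
  have hlam0ne : ∀ α, lam0 α ≠ 0 := fun α => inv_ne_zero (pow_ne_zero _ hc0)
  set u : ℕ → Matrix (Fin n) (Fin n) 𝕜 := fun α => lam0 α • g (α + N) with hu
  have hcpos : (0 : ℝ) < ‖c‖ := by linarith
  have hnormu : ∀ α, ‖u α‖ = (‖c‖ ^ m α)⁻¹ * ‖g (α + N)‖ := by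
    intro α
    rw [hu]
    simp only [norm_smul, hlam0, norm_inv, norm_pow]
  have hpowpos : ∀ α, (0 : ℝ) < ‖c‖ ^ m α := fun α => pow_pos hcpos _
  have hub1 : ∀ α, 1 ≤ ‖u α‖ := by
    intro α
    rw [hnormu α, le_inv_mul_iff₀ (hpowpos α), mul_one]
    exact hm1 α
  have hub2 : ∀ α, ‖u α‖ ≤ ‖c‖ := by
    intro α
    have h2 : ‖g (α + N)‖ ≤ ‖c‖ ^ m α * ‖c‖ := by
      rw [← pow_succ]; exact (hm2 α).le
    rw [hnormu α, inv_mul_le_iff₀ (hpowpos α)]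
    nlinarith [h2, hpowpos α]
  -- lam0 tends to 0
  have hgdiv : Tendsto (fun α => ‖g (α + N)‖) atTop atTop :=
    hdiv.comp (tendsto_add_atTop_nat N)
  have hgpos : ∀ α, (0 : ℝ) < ‖g (α + N)‖ := fun α =>
    lt_of_lt_of_le one_pos (hN (α + N) (Nat.le_add_left N α))
  have hlamle : ∀ α, ‖lam0 α‖ ≤ ‖c‖ / ‖g (α + N)‖ := by
    intro α
    rw [le_div_iff₀ (hgpos α)]
    calc ‖lam0 α‖ * ‖g (α + N)‖ = ‖u α‖ := (norm_smul _ _).symm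
      _ ≤ ‖c‖ := hub2 α
  have hlamtend : Tendsto lam0 atTop (𝓝 0) := by
    refine squeeze_zero_norm hlamle ?_
    exact Tendsto.div_atTop tendsto_const_nhds hgdiv
  -- compactness
  haveI : ProperSpace (Matrix (Fin n) (Fin n) 𝕜) :=
    inferInstanceAs (ProperSpace (Fin n → Fin n → 𝕜))
  have hmem : ∀ α, u α ∈ Metric.closedBall (0 : Matrix (Fin n) (Fin n) 𝕜) ‖c‖ :=
    fun α => mem_closedBall_zero_iff.mpr (hub2 α)
  obtain ⟨v, hvmem, φ', hφ'mono, hφ'tend⟩ :=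
    (isCompact_closedBall (0 : Matrix (Fin n) (Fin n) 𝕜) ‖c‖).tendsto_subseq hmem
  refine ⟨fun j => φ' j + N, fun j => lam0 (φ' j), v,
    fun a b hab => Nat.add_lt_add_right (hφ'mono hab) N,
    hlamtend.comp (hφ'mono.tendsto_atTop), ?_, ?_, ?_⟩
  · -- v ≠ 0
    have h1 : 1 ≤ ‖v‖ :=
      ge_of_tendsto hφ'tend.norm (Eventually.of_forall fun j => hub1 (φ' j))
    intro h0
    rw [h0, norm_zero] at h1; linarith
  · -- v ^ n = 0
    have hconj : ∀ α, u α = h (α + N) * (lam0 α • t) * (h (α + N))⁻¹ := by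
      intro α
      rw [hu, hg]
      simp only [Matrix.mul_smul, Matrix.smul_mul]
    have hupow : ∀ α k, u α ^ k = h (α + N) * (lam0 α • t) ^ k * (h (α + N))⁻¹ := by
      intro α k
      rw [hconj α, L92_conj_pow _ (hSL (α + N))]
    have hCH : ∀ α, u α ^ n
        = -∑ i ∈ Finset.range n, ((lam0 α) ^ (n - i) * t.charpoly.coeff i) • u α ^ i := by
      intro α
      have hch := L92_pow_eq_neg_sum (lam0 α • t)
      have hcoef : ∀ i ∈ Finset.range n, (lam0 α • t).charpoly.coeff i • (lam0 α • t) ^ i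
          = ((lam0 α) ^ (n - i) * t.charpoly.coeff i) • (lam0 α • t) ^ i := by
        intro i hi
        rw [L92_charpoly_smul_coeff (hlam0ne α) t i (le_of_lt (Finset.mem_range.mp hi))]
      rw [Finset.sum_congr rfl hcoef] at hch
      rw [hupow α n, hch]
      rw [Matrix.mul_neg, Matrix.neg_mul, Finset.mul_sum, Finset.sum_mul]
      congr 1
      refine Finset.sum_congr rfl fun i _ => ?_
      rw [mul_smul_comm, smul_mul_assoc, hupow α i]
    have hpowtend : ∀ k, Tendsto (fun j => u (φ' j) ^ k) atTop (𝓝 (v ^ k)) := by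
      intro k
      haveI : ContinuousMul (Matrix (Fin n) (Fin n) 𝕜) :=
        (@Matrix.topologicalRing (Fin n) 𝕜 _ _ _ _).toContinuousMul
      exact (continuous_pow k).tendsto v |>.comp hφ'tend
    have hlamtend' : Tendsto (fun j => lam0 (φ' j)) atTop (𝓝 0) :=
      hlamtend.comp (hφ'mono.tendsto_atTop)
    have hsumtend : Tendsto (fun j =>
        -∑ i ∈ Finset.range n, ((lam0 (φ' j)) ^ (n - i) * t.charpoly.coeff i) • u (φ' j) ^ i)
        atTop (𝓝 0) := by
      have hsum : Tendsto (fun j =>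
          ∑ i ∈ Finset.range n, ((lam0 (φ' j)) ^ (n - i) * t.charpoly.coeff i) • u (φ' j) ^ i)
          atTop (𝓝 (∑ i ∈ Finset.range n, (0 : Matrix (Fin n) (Fin n) 𝕜))) := by
        refine tendsto_finset_sum _ fun i hi => ?_
        have hni : n - i ≠ 0 := by
          have := Finset.mem_range.mp hi; omega
        have hscal : Tendsto (fun j => (lam0 (φ' j)) ^ (n - i) * t.charpoly.coeff i)
            atTop (𝓝 0) := by
          have := (hlamtend'.pow (n - i)).mul_const (t.charpoly.coeff i)
          rwa [zero_pow hni, zero_mul] at this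
        have := hscal.smul (hpowtend i)
        rwa [zero_smul] at this
      simpa using hsum.neg
    have h1 := hpowtend n
    rw [show (fun j => u (φ' j) ^ n) = (fun j =>
        -∑ i ∈ Finset.range n, ((lam0 (φ' j)) ^ (n - i) * t.charpoly.coeff i) • u (φ' j) ^ i)
      from funext fun j => hCH (φ' j)] at h1
    exact tendsto_nhds_unique h1 hsumtend
  · -- final tendsto
    have heq : (fun j => h (φ' j + N) * (lam0 (φ' j) • t) * (h (φ' j + N))⁻¹) = u ∘ φ' := by
      funext j
      rw [Function.comp_apply, hu, hg]
      simp only [Matrix.mul_smul, Matrix.smul_mul]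
    rw [heq]
    exact hφ'tend
end

section
/- Let n ≥ 1 and let t be an n×n real matrix with trace 0. Suppose (h_α)_{α∈ℕ} is a sequence in SL_n(ℝ) such that ‖h_α t h_α⁻¹‖ → ∞ as α → ∞. Then there exist a strictly increasing sequence of indices (α_j), a sequence of real numbers λ_j → 0, and a nonzero nilpotent n×n real matrix v (v ≠ 0 and v^n = 0) such that h_{α_j} (λ_j t) h_{α_j}⁻¹ → v as j → ∞, and moreover for every real number κ one has h_{α_j} · exp(κ λ_j t) · h_{α_j}⁻¹ → exp(κ v) as j → ∞, where exp denotes the matrix exponential. -/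
open Filter Topology Matrix

attribute [local instance] Matrix.normedAddCommGroup

attribute [local instance] Matrix.normedSpace

private lemma eval_charpoly_aux {n : ℕ} (M : Matrix (Fin n) (Fin n) ℝ) (x : ℝ) :
    (Matrix.charpoly M).eval x = ((x • (1 : Matrix (Fin n) (Fin n) ℝ)) - M).det := by
  rw [Matrix.charpoly, ← Polynomial.coe_evalRingHom, RingHom.map_det]
  congr 1
  ext i j
  by_cases hij : i = j <;>
    simp [Matrix.charmatrix_apply, hij, Matrix.one_apply, Matrix.smul_apply,
      Matrix.diagonal_apply]

/-- **Lemma 9.2 (archimedean case).** If `t` is a traceless real `n × n` matrix and `h α` is a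
sequence in `SL_n(ℝ)` with `‖h α * t * (h α)⁻¹‖ → ∞`, then along a subsequence there are scalars
`λ_j → 0` such that `h_{α_j} (λ_j t) h_{α_j}⁻¹` converges to a nonzero nilpotent matrix `v`,
and moreover `h_{α_j} exp(κ λ_j t) h_{α_j}⁻¹ → exp(κ v)` for every real `κ`. -/
theorem statement1 {n : ℕ} (hn : 1 ≤ n) (t : Matrix (Fin n) (Fin n) ℝ)
    (ht : Matrix.trace t = 0)
    (h : ℕ → Matrix (Fin n) (Fin n) ℝ) (hSL : ∀ α, (h α).det = 1)
    (hdiv : Tendsto (fun α => ‖h α * t * (h α)⁻¹‖) atTop atTop) :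
    ∃ (φ : ℕ → ℕ) (lam : ℕ → ℝ) (v : Matrix (Fin n) (Fin n) ℝ),
      StrictMono φ ∧ Tendsto lam atTop (𝓝 0) ∧ v ≠ 0 ∧ v ^ n = 0 ∧
      Tendsto (fun j => h (φ j) * (lam j • t) * (h (φ j))⁻¹) atTop (𝓝 v) ∧
      ∀ κ : ℝ,
        Tendsto (fun j => h (φ j) * NormedSpace.exp ((κ * lam j) • t) * (h (φ j))⁻¹)
          atTop (𝓝 (NormedSpace.exp (κ • v))) := by
  classical
  have hunit : ∀ α, IsUnit (h α) := fun α =>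
    (Matrix.isUnit_iff_isUnit_det _).mpr (by rw [hSL α]; exact isUnit_one)
  set g : ℕ → Matrix (Fin n) (Fin n) ℝ := fun α => h α * t * (h α)⁻¹ with hgdef
  set lam : ℕ → ℝ := fun α => ‖g α‖⁻¹ with hlamdef
  have hlam0 : Tendsto lam atTop (𝓝 0) := hdiv.inv_tendsto_atTop
  set u : ℕ → Matrix (Fin n) (Fin n) ℝ := fun α => lam α • g α with hudef
  -- key rewriting: u α = h α * (lam α • t) * (h α)⁻¹  (and with any scalar)
  have hconjsmul : ∀ (c : ℝ) (α : ℕ), h α * (c • t) * (h α)⁻¹ = c • g α := by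
    intro c α
    rw [hgdef]
    simp [Matrix.mul_smul, Matrix.smul_mul]
  have hmem : ∀ α, u α ∈ Metric.closedBall (0 : Matrix (Fin n) (Fin n) ℝ) 1 := by
    intro α
    rw [Metric.mem_closedBall, dist_zero_right, hudef, norm_smul]
    rcases eq_or_ne ‖g α‖ 0 with h0 | h0
    · simp [hlamdef, h0]
    · simp [hlamdef, Real.norm_eq_abs, abs_of_nonneg (inv_nonneg.2 (norm_nonneg _)),
        inv_mul_cancel₀ h0]
  obtain ⟨v, -, φ, hφ, hconv⟩ :=
    (isCompact_closedBall (0 : Matrix (Fin n) (Fin n) ℝ) 1).tendsto_subseq hmem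
  have hφtop : Tendsto φ atTop atTop := hφ.tendsto_atTop
  -- norm of v is 1
  have hnormv : ‖v‖ = 1 := by
    have h1 : Tendsto (fun j => ‖u (φ j)‖) atTop (𝓝 ‖v‖) := (hconv.norm : _)
    have h2 : ∀ᶠ j in atTop, ‖u (φ j)‖ = 1 := by
      have : ∀ᶠ j in atTop, 1 ≤ ‖g (φ j)‖ := (hdiv.comp hφtop).eventually_ge_atTop 1
      filter_upwards [this] with j hj
      have h0 : ‖g (φ j)‖ ≠ 0 := by positivity
      rw [hudef, norm_smul, hlamdef, Real.norm_eq_abs,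
        abs_of_nonneg (inv_nonneg.2 (norm_nonneg _)), inv_mul_cancel₀ h0]
    exact tendsto_nhds_unique (h1.congr' (by filter_upwards [h2] with j hj; rw [hj]))
      tendsto_const_nhds
  have hvne : v ≠ 0 := by
    intro h0
    rw [h0, norm_zero] at hnormv
    exact zero_ne_one hnormv
  have hlamφ : Tendsto (fun j => lam (φ j)) atTop (𝓝 0) := hlam0.comp hφtop
  -- determinant identity
  have hdet1 : ∀ (x : ℝ) (α : ℕ),
      ((x • (1 : Matrix (Fin n) (Fin n) ℝ)) - u α).det
        = ((x • (1 : Matrix (Fin n) (Fin n) ℝ)) - lam α • t).det := by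
    intro x α
    have hinv : h α * (h α)⁻¹ = 1 := Matrix.mul_nonsing_inv _ (by rw [hSL α]; exact isUnit_one)
    have key : (x • (1 : Matrix (Fin n) (Fin n) ℝ)) - u α
        = h α * ((x • (1 : Matrix (Fin n) (Fin n) ℝ)) - lam α • t) * (h α)⁻¹ := by
      rw [Matrix.mul_sub, Matrix.sub_mul, hconjsmul]
      congr 1
      rw [Matrix.mul_smul, Matrix.smul_mul, mul_one, hinv]
    rw [key, Matrix.det_mul, Matrix.det_mul, hSL α, Matrix.det_nonsing_inv, hSL α]
    simp
  -- charpoly of v is X ^ n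
  have hdetv : ∀ x : ℝ, ((x • (1 : Matrix (Fin n) (Fin n) ℝ)) - v).det = x ^ n := by
    intro x
    have hcont : Continuous (fun M : Matrix (Fin n) (Fin n) ℝ =>
        ((x • (1 : Matrix (Fin n) (Fin n) ℝ)) - M).det) :=
      (continuous_const.sub continuous_id).matrix_det
    have h1 : Tendsto (fun j => ((x • (1 : Matrix (Fin n) (Fin n) ℝ)) - u (φ j)).det)
        atTop (𝓝 (((x • (1 : Matrix (Fin n) (Fin n) ℝ)) - v).det)) :=
      (hcont.tendsto v).comp hconv
    have hcont2 : Continuous (fun c : ℝ =>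
        ((x • (1 : Matrix (Fin n) (Fin n) ℝ)) - c • t).det) :=
      (continuous_const.sub (continuous_id.smul continuous_const)).matrix_det
    have h2 : Tendsto (fun j => ((x • (1 : Matrix (Fin n) (Fin n) ℝ)) - lam (φ j) • t).det)
        atTop (𝓝 (((x • (1 : Matrix (Fin n) (Fin n) ℝ)) - (0:ℝ) • t).det)) :=
      (hcont2.tendsto 0).comp hlamφ
    have h2' : Tendsto (fun j => ((x • (1 : Matrix (Fin n) (Fin n) ℝ)) - u (φ j)).det)
        atTop (𝓝 (((x • (1 : Matrix (Fin n) (Fin n) ℝ)) - (0:ℝ) • t).det)) := by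
      refine h2.congr fun j => (hdet1 x (φ j)).symm
    have := tendsto_nhds_unique h1 h2'
    rw [this]
    simp [Matrix.det_smul]
  have hcp : Matrix.charpoly v = Polynomial.X ^ n := by
    apply Polynomial.funext
    intro x
    rw [eval_charpoly_aux, hdetv]
    simp
  have hvn : v ^ n = 0 := by
    have := v.aeval_self_charpoly
    rw [hcp] at this
    simpa using this
  -- convergence of the scaled conjugates
  have hconv' : Tendsto (fun j => h (φ j) * (lam (φ j) • t) * (h (φ j))⁻¹) atTop (𝓝 v) := by
    refine hconv.congr fun j => ?_
    rw [Function.comp_apply, hudef, hconjsmul]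
  refine ⟨φ, fun j => lam (φ j), v, hφ, hlamφ, hvne, hvn, hconv', ?_⟩
  -- exponential part
  intro κ
  have hexp_cont : Continuous (NormedSpace.exp : Matrix (Fin n) (Fin n) ℝ → _) := by
    letI := Matrix.linftyOpSemiNormedRing (α := ℝ) (n := Fin n)
    letI := Matrix.linftyOpNormedRing (α := ℝ) (n := Fin n)
    letI := Matrix.linftyOpNormedAlgebra (α := ℝ) (n := Fin n) (R := ℝ)
    letI : NormedAlgebra ℚ (Matrix (Fin n) (Fin n) ℝ) := .restrictScalars ℚ ℝ _
    have := FiniteDimensional.complete ℝ (Matrix (Fin n) (Fin n) ℝ)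
    exact @NormedSpace.exp_continuous _ _ _ this
  have hsm : Tendsto (fun j => κ • u (φ j)) atTop (𝓝 (κ • v)) := hconv.const_smul κ
  have hmain : Tendsto (fun j => NormedSpace.exp (κ • u (φ j))) atTop
      (𝓝 (NormedSpace.exp (κ • v))) := (hexp_cont.tendsto _).comp hsm
  refine hmain.congr fun j => ?_
  rw [← Matrix.exp_conj (h (φ j)) _ (hunit (φ j)), hconjsmul]
  congr 1
  rw [hudef, smul_smul]
end

section
/- Let 𝕜 be a normed field, n ≥ 1, and t an n×n matrix over 𝕜. Suppose (g_α) is a sequence of invertible n×n matrices over 𝕜, (λ_α) is a sequence in 𝕜 with λ_α → 0, and the sequence of matrices g_α (λ_α t) g_α⁻¹ converges to a matrix v. Then v is nilpotent: v^n = 0. -/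
open Filter Topology Matrix Polynomial

section Aux

variable {R : Type*}

private lemma coeff_comp_C_mul_X [CommSemiring R] (p : R[X]) (c : R) (k : ℕ) :
    (p.comp (C c * X)).coeff k = c ^ k * p.coeff k := by
  induction p using Polynomial.induction_on' with
  | add p q hp hq => simp [add_comp, mul_add, hp, hq]
  | monomial m a =>
    rw [monomial_comp, mul_pow, ← C_pow, coeff_monomial, ← mul_assoc, ← C_mul,
      coeff_C_mul, coeff_X_pow]
    rcases eq_or_ne m k with h | h
    · subst h; simp [mul_comm]
    · simp [h, Ne.symm h]

private lemma charpolyRev_smul [CommRing R] {n : ℕ} (c : R)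
    (M : Matrix (Fin n) (Fin n) R) :
    (c • M).charpolyRev = M.charpolyRev.comp (C c * X) := by
  let φ : R[X] →+* R[X] := (Polynomial.aeval (R := R) (C c * X : R[X])).toRingHom
  have hφX : φ X = C c * X := by simp [φ]
  have hφC : ∀ a : R, φ (C a) = C a := fun a => by simp [φ]
  have hcomp : ∀ p : R[X], p.comp (C c * X) = φ p := fun p => by
    simp [φ, Polynomial.comp, Polynomial.aeval_def, Polynomial.algebraMap_eq]
  have hmat : (RingHom.mapMatrix φ) ((1 : Matrix (Fin n) (Fin n) R[X]) - (X : R[X]) • M.map C)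
      = (1 : Matrix (Fin n) (Fin n) R[X]) - (X : R[X]) • (c • M).map C := by
    ext i j
    rcases eq_or_ne i j with h | h
    · subst h
      simp only [RingHom.mapMatrix_apply, Matrix.map_apply, Matrix.sub_apply,
        Matrix.smul_apply, smul_eq_mul, map_sub, _root_.map_mul, hφX, hφC,
        Matrix.one_apply_eq, _root_.map_one, C_mul]
      ring
    · simp only [RingHom.mapMatrix_apply, Matrix.map_apply, Matrix.sub_apply,
        Matrix.smul_apply, smul_eq_mul, map_sub, _root_.map_mul, hφX, hφC,
        Matrix.one_apply_ne h, _root_.map_zero, C_mul]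
      ring
  rw [hcomp, Matrix.charpolyRev, Matrix.charpolyRev, RingHom.map_det, hmat]

private lemma charpoly_coeff_smul {𝕜 : Type*} [Field 𝕜] {n : ℕ} (c : 𝕜)
    (M : Matrix (Fin n) (Fin n) 𝕜) {i : ℕ} (hi : i ≤ n) :
    ((c • M).charpoly).coeff i = c ^ (n - i) * M.charpoly.coeff i := by
  have hd1 : ((c • M).charpoly).natDegree = n := by
    rw [Matrix.charpoly_natDegree_eq_dim, Fintype.card_fin]
  have hd2 : (M.charpoly).natDegree = n := by
    rw [Matrix.charpoly_natDegree_eq_dim, Fintype.card_fin]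
  have h1 : ((c • M).charpoly).coeff i = ((c • M).charpoly).reverse.coeff (n - i) := by
    rw [Polynomial.coeff_reverse, hd1, Polynomial.revAt_le (Nat.sub_le _ _),
      Nat.sub_sub_self hi]
  have h2 : (M.charpoly).coeff i = (M.charpoly).reverse.coeff (n - i) := by
    rw [Polynomial.coeff_reverse, hd2, Polynomial.revAt_le (Nat.sub_le _ _),
      Nat.sub_sub_self hi]
  rw [h1, h2, Matrix.reverse_charpoly, Matrix.reverse_charpoly, charpolyRev_smul,
    coeff_comp_C_mul_X]

private lemma aeval_units_conj {𝕜 : Type*} [CommRing 𝕜] {n : ℕ}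
    (u : (Matrix (Fin n) (Fin n) 𝕜)ˣ) (M : Matrix (Fin n) (Fin n) 𝕜) (p : 𝕜[X]) :
    Polynomial.aeval ((u : Matrix (Fin n) (Fin n) 𝕜) * M * (↑u⁻¹ : Matrix (Fin n) (Fin n) 𝕜)) p
      = (u : Matrix (Fin n) (Fin n) 𝕜) * Polynomial.aeval M p
          * (↑u⁻¹ : Matrix (Fin n) (Fin n) 𝕜) := by
  set U : Matrix (Fin n) (Fin n) 𝕜 := ↑u with hU
  set Ui : Matrix (Fin n) (Fin n) 𝕜 := ↑u⁻¹ with hUi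
  have hUiU : Ui * U = 1 := u.inv_mul
  have hUUi : U * Ui = 1 := u.mul_inv
  have hpow : ∀ k : ℕ, (U * M * Ui) ^ k = U * M ^ k * Ui := by
    intro k
    induction k with
    | zero => rw [pow_zero, pow_zero, mul_one, hUUi]
    | succ k ih =>
      rw [pow_succ, ih, pow_succ]
      simp only [mul_assoc]
      rw [← mul_assoc Ui U, hUiU, one_mul]
  induction p using Polynomial.induction_on' with
  | add p q hp hq => simp [map_add, hp, hq, mul_add, add_mul]
  | monomial m a =>
    rw [Polynomial.aeval_monomial, Polynomial.aeval_monomial, hpow,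
      ← Algebra.smul_def, ← Algebra.smul_def, mul_smul_comm, smul_mul_assoc]

end Aux

attribute [local instance] Matrix.normedAddCommGroup Matrix.normedSpace

/-- Intermediate claim in the proof of Lemma 9.2: a limit of conjugates
`g α * (λ_α • t) * (g α)⁻¹` with `λ_α → 0` is a nilpotent matrix. -/
theorem statement2 {𝕜 : Type*} [NormedField 𝕜] {n : ℕ} (hn : 1 ≤ n)
    (t : Matrix (Fin n) (Fin n) 𝕜) (g : ℕ → Matrix (Fin n) (Fin n) 𝕜)
    (hg : ∀ α, IsUnit (g α)) (lam : ℕ → 𝕜) (hlam : Tendsto lam atTop (𝓝 0))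
    (v : Matrix (Fin n) (Fin n) 𝕜)
    (hconv : Tendsto (fun α => g α * (lam α • t) * (g α)⁻¹) atTop (𝓝 v)) :
    v ^ n = 0 := by
  classical
  set a : ℕ → Matrix (Fin n) (Fin n) 𝕜 := fun α => g α * (lam α • t) * (g α)⁻¹ with ha
  -- Cayley–Hamilton for each conjugate
  have key : ∀ α, (a α) ^ n
      = -∑ i ∈ Finset.range n, ((lam α) ^ (n - i) * t.charpoly.coeff i) • (a α) ^ i := by
    intro α
    set u : (Matrix (Fin n) (Fin n) 𝕜)ˣ := (hg α).unit with hu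
    have hau : a α = (↑u : Matrix (Fin n) (Fin n) 𝕜) * (lam α • t)
        * (↑u⁻¹ : Matrix (Fin n) (Fin n) 𝕜) := by
      rw [ha]
      simp only [Matrix.coe_units_inv, hu, IsUnit.unit_spec]
    have h0 : Polynomial.aeval (a α) ((lam α • t).charpoly) = 0 := by
      rw [hau, aeval_units_conj, Matrix.aeval_self_charpoly, mul_zero, zero_mul]
    have hdeg : ((lam α • t).charpoly).natDegree = n := by
      rw [Matrix.charpoly_natDegree_eq_dim, Fintype.card_fin]
    rw [Polynomial.aeval_eq_sum_range' (n := n + 1) (by rw [hdeg]; exact lt_add_one n)]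
      at h0
    rw [Finset.sum_range_succ] at h0
    have hlead : ((lam α • t).charpoly).coeff n = 1 := by
      have := (Matrix.charpoly_monic (lam α • t)).coeff_natDegree
      rwa [hdeg] at this
    rw [hlead, one_smul] at h0
    rw [eq_neg_of_add_eq_zero_right h0]
    congr 1
    refine Finset.sum_congr rfl fun i hi => ?_
    rw [charpoly_coeff_smul _ _ (le_of_lt (Finset.mem_range.mp hi))]
  haveI : ContinuousMul (Matrix (Fin n) (Fin n) 𝕜) :=
    ⟨by exact Continuous.matrix_mul continuous_fst continuous_snd⟩
  have h1 : Tendsto (fun α => (a α) ^ n) atTop (𝓝 (v ^ n)) := hconv.pow n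
  have h2 : Tendsto
      (fun α => -∑ i ∈ Finset.range n, ((lam α) ^ (n - i) * t.charpoly.coeff i) • (a α) ^ i)
      atTop (𝓝 0) := by
    rw [show (0 : Matrix (Fin n) (Fin n) 𝕜) = -0 by simp]
    apply Tendsto.neg
    have : Tendsto
        (fun α => ∑ i ∈ Finset.range n, ((lam α) ^ (n - i) * t.charpoly.coeff i) • (a α) ^ i)
        atTop (𝓝 (∑ i ∈ Finset.range n, (0 : Matrix (Fin n) (Fin n) 𝕜))) := by
      apply tendsto_finset_sum
      intro i hi
      have hsc : Tendsto (fun α => (lam α) ^ (n - i) * t.charpoly.coeff i) atTop (𝓝 0) := by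
        have hpow : Tendsto (fun α => (lam α) ^ (n - i)) atTop (𝓝 0) := by
          have := hlam.pow (n - i)
          rwa [zero_pow (Nat.sub_ne_zero_of_lt (Finset.mem_range.mp hi))] at this
        simpa using hpow.mul_const (t.charpoly.coeff i)
      have := hsc.smul (hconv.pow i)
      simpa using this
    simpa using this
  simp only [key] at h1
  exact tendsto_nhds_unique h1 h2
end

section
/- Let n ≥ 1 and let t be an n×n real matrix of the form t = p d p⁻¹, where p is an invertible n×n real matrix and d is a diagonal matrix whose diagonal entries are integers summing to zero (so t is the differential at 1 of a cocharacter of SL_n). Then for every r > 0 there exists C > 0 with the following property: for every g ∈ SL_n(ℝ) with ‖g t g⁻¹‖ ≤ r there exists h ∈ SL_n(ℝ) with ‖h‖ ≤ C and h t h⁻¹ = g t g⁻¹. -/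
open Filter Topology Matrix

attribute [local instance] Matrix.normedAddCommGroup

open Polynomial

attribute [local instance] Matrix.normedSpace

def conjAlgHom {A : Type*} [Ring A] [Algebra ℝ A] (u : Aˣ) : A →ₐ[ℝ] A where
  toFun a := ↑u * a * ↑u⁻¹
  map_one' := by simp
  map_mul' a b := by
    simp only [mul_assoc, Units.inv_mul_cancel_left]
  map_zero' := by simp
  map_add' a b := by noncomm_ring
  commutes' r := by
    show ↑u * algebraMap ℝ A r * ↑u⁻¹ = algebraMap ℝ A r
    rw [← Algebra.commutes r (↑u : A), mul_assoc]; simp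

theorem aux_norm_mul {n : ℕ} (A B : Matrix (Fin n) (Fin n) ℝ) :
    ‖A * B‖ ≤ n * ‖A‖ * ‖B‖ := by
  rw [Matrix.norm_le_iff (by positivity)]
  intro i j
  calc ‖(A * B) i j‖ = |∑ k, A i k * B k j| := rfl
    _ ≤ ∑ k, |A i k * B k j| := Finset.abs_sum_le_sum_abs _ _
    _ ≤ ∑ _k : Fin n, ‖A‖ * ‖B‖ := by
        refine Finset.sum_le_sum fun k _ => ?_
        rw [abs_mul]
        exact mul_le_mul (A.norm_entry_le_entrywise_sup_norm) (B.norm_entry_le_entrywise_sup_norm)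
          (abs_nonneg _) (norm_nonneg _)
    _ = n * ‖A‖ * ‖B‖ := by simp [Finset.sum_const, mul_assoc]

lemma key_min_poly {n : ℕ} (Λ : Finset ℤ) (v : Fin n → ℤ) (hv : ∀ i, v i ∈ Λ)
    (x G : Matrix (Fin n) (Fin n) ℝ) (hG : IsUnit G)
    (hx : x = G * Matrix.diagonal (fun i => (v i : ℝ)) * G⁻¹) :
    aeval x (∏ ν ∈ Λ, (X - C (ν : ℝ))) = 0 := by
  set m : ℝ[X] := ∏ ν ∈ Λ, (X - C (ν : ℝ)) with hm
  set d : Matrix (Fin n) (Fin n) ℝ := Matrix.diagonal (fun i => (v i : ℝ)) with hd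
  have hdm : aeval d m = 0 := by
    have h1 : aeval ((Matrix.diagonalAlgHom (R:=ℝ) (n:=Fin n) (α:=ℝ)) (fun i => (v i : ℝ))) m
        = (Matrix.diagonalAlgHom (R:=ℝ) (n:=Fin n) (α:=ℝ)) (aeval (fun i => (v i : ℝ)) m) :=
      aeval_algHom_apply _ _ _
    have h2 : (aeval (fun i => (v i : ℝ)) m) = 0 := by
      funext i
      have h4 : aeval ((v i : ℝ)) m = 0 := by
        rw [hm, map_prod]
        exact Finset.prod_eq_zero (hv i) (by simp)
      calc (aeval (fun j => (v j : ℝ)) m) i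
          = aeval ((v i : ℝ)) m :=
            (aeval_algHom_apply (Pi.evalAlgHom ℝ (fun _ : Fin n => ℝ) i)
              (fun j => (v j : ℝ)) m).symm
        _ = 0 := h4
    rw [h2] at h1
    rw [hd]
    calc (aeval (Matrix.diagonal fun i => (v i : ℝ))) m
        = Matrix.diagonal (0 : Fin n → ℝ) := h1
      _ = 0 := Matrix.diagonal_zero
  obtain ⟨u, hu⟩ := hG
  have hinv : (↑u⁻¹ : Matrix (Fin n) (Fin n) ℝ) = G⁻¹ := by
    rw [← hu]; exact (Matrix.coe_units_inv u)
  have hxc : x = conjAlgHom u d := by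
    rw [hx, conjAlgHom]; simp only [AlgHom.coe_mk, RingHom.coe_mk, MonoidHom.coe_mk, OneHom.coe_mk]
    rw [hu, hinv]
  rw [hxc, aeval_algHom_apply, hdm, map_zero]

lemma key_eigen {n : ℕ} (Λ : Finset ℤ) (v : Fin n → ℤ) (hv : ∀ i, v i ∈ Λ)
    (x G : Matrix (Fin n) (Fin n) ℝ) (hG : IsUnit G)
    (hx : x = G * Matrix.diagonal (fun i => (v i : ℝ)) * G⁻¹) (μ : ℤ) (hμ : μ ∈ Λ) :
    x * aeval x (Lagrange.basis Λ (fun ν => (ν : ℝ)) μ)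
      = (μ : ℝ) • aeval x (Lagrange.basis Λ (fun ν => (ν : ℝ)) μ) := by
  have hpoly : (X - C (μ : ℝ)) * Lagrange.basis Λ (fun ν => (ν : ℝ)) μ
      = C (∏ j ∈ Λ.erase μ, ((μ : ℝ) - (j : ℝ))⁻¹) * ∏ ν ∈ Λ, (X - C (ν : ℝ)) := by
    rw [Lagrange.basis]
    simp only [Lagrange.basisDivisor]
    rw [Finset.prod_mul_distrib, ← map_prod]
    rw [← Finset.mul_prod_erase Λ _ hμ]; ring
  have h0 := key_min_poly Λ v hv x G hG hx
  have := congrArg (aeval x) hpoly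
  rw [_root_.map_mul, _root_.map_mul, h0, mul_zero, map_sub, aeval_X, aeval_C] at this
  rw [sub_mul, sub_eq_zero] at this
  rw [this, Algebra.smul_def]

lemma det_expand {n : ℕ} (Λ : Finset ℤ) (hΛ : Λ.Nonempty) (Q : ℤ → Matrix (Fin n) (Fin n) ℝ)
    (hQ : ∑ μ ∈ Λ, Q μ = 1) :
    ∃ f ∈ Fintype.piFinset (fun _ : Fin n => Λ),
      ((Fintype.piFinset (fun _ : Fin n => Λ)).card : ℝ)⁻¹ ≤
        |Matrix.det (Matrix.of fun i j => (Q (f i)) j i)| := by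
  set T := Fintype.piFinset (fun _ : Fin n => Λ) with hT
  have hTne : T.Nonempty := Fintype.piFinset_nonempty.2 fun _ => hΛ
  have hcard : 0 < (T.card : ℝ) := by exact_mod_cast hTne.card_pos
  have hsum : ∑ f ∈ T, Matrix.det (Matrix.of fun i j => (Q (f i)) j i) = 1 := by
    have hml := (Matrix.detRowAlternating :
        (Fin n → ℝ) [⋀^Fin n]→ₗ[ℝ] ℝ).toMultilinearMap.map_sum_finset
      (g := fun i (μ : ℤ) => (fun j => Q μ j i)) (A := fun _ => Λ)
    have h1 : (fun i => ∑ μ ∈ Λ, (fun j => Q μ j i)) = (1 : Matrix (Fin n) (Fin n) ℝ) := by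
      funext i j
      have h2 : (∑ μ ∈ Λ, Q μ) j i = ∑ μ ∈ Λ, Q μ j i := by
        simp [Matrix.sum_apply]
      have h3 : ∑ μ ∈ Λ, Q μ j i = (1 : Matrix (Fin n) (Fin n) ℝ) j i := by
        rw [← h2, hQ]
      rw [Finset.sum_apply]
      rw [h3, Matrix.one_apply, Matrix.one_apply]
      simp [eq_comm]
    rw [h1] at hml
    calc ∑ f ∈ T, Matrix.det (Matrix.of fun i j => (Q (f i)) j i)
        = ((Matrix.detRowAlternating : (Fin n → ℝ) [⋀^Fin n]→ₗ[ℝ] ℝ).toMultilinearMap)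
            (1 : Matrix (Fin n) (Fin n) ℝ) := hml.symm
      _ = 1 := Matrix.det_one
  by_contra hcon
  push_neg at hcon
  have hlt : ∀ f ∈ T, |Matrix.det (Matrix.of fun i j => (Q (f i)) j i)| < (T.card : ℝ)⁻¹ :=
    fun f hf => hcon f hf
  have : (1 : ℝ) < 1 := by
    calc (1:ℝ) = |∑ f ∈ T, Matrix.det (Matrix.of fun i j => (Q (f i)) j i)| := by
          rw [hsum]; simp
      _ ≤ ∑ f ∈ T, |Matrix.det (Matrix.of fun i j => (Q (f i)) j i)| :=
          Finset.abs_sum_le_sum_abs _ _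
      _ < ∑ _f ∈ T, (T.card : ℝ)⁻¹ := Finset.sum_lt_sum_of_nonempty hTne hlt
      _ = 1 := by
          rw [Finset.sum_const, nsmul_eq_mul]
          field_simp
  exact absurd this (lt_irrefl 1)

lemma bound_B {n : ℕ} (Λ : Finset ℤ) (r : ℝ) :
    ∃ B : ℝ, 0 < B ∧ ∀ μ ∈ Λ, ∀ x : Matrix (Fin n) (Fin n) ℝ, ‖x‖ ≤ r →
      ‖aeval x (Lagrange.basis Λ (fun ν => (ν : ℝ)) μ)‖ ≤ B := by
  have key : ∀ μ : ℤ, ∃ C : ℝ, 0 ≤ C ∧ ∀ x : Matrix (Fin n) (Fin n) ℝ, ‖x‖ ≤ r →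
      ‖aeval x (Lagrange.basis Λ (fun ν => (ν : ℝ)) μ)‖ ≤ C := by
    intro μ
    obtain ⟨C, hC⟩ := (isCompact_closedBall (0 : Matrix (Fin n) (Fin n) ℝ) r).exists_bound_of_continuousOn
      ((Lagrange.basis Λ (fun ν => (ν : ℝ)) μ).continuous_aeval (A := Matrix (Fin n) (Fin n) ℝ)).continuousOn
    refine ⟨max C 0, le_max_right _ _, fun x hx => ?_⟩
    have : x ∈ Metric.closedBall (0 : Matrix (Fin n) (Fin n) ℝ) r := by
      simpa [Metric.mem_closedBall, dist_zero_right] using hx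
    exact le_trans (hC x this) (le_max_left _ _)
  choose Cf hCf0 hCf using key
  refine ⟨(∑ μ ∈ Λ, Cf μ) + 1, by have := Finset.sum_nonneg (fun i (_ : i ∈ Λ) => hCf0 i); linarith, fun μ hμ x hx => ?_⟩
  calc ‖aeval x (Lagrange.basis Λ (fun ν => (ν : ℝ)) μ)‖ ≤ Cf μ := hCf μ x hx
    _ ≤ ∑ μ ∈ Λ, Cf μ := Finset.single_le_sum (fun i _ => hCf0 i) hμ
    _ ≤ _ := by linarith

set_option maxHeartbeats 1000000 in
/-- **Lemma 9.1 for `SL_n(ℝ)`.** Let `t = p d p⁻¹` where `d` is diagonal with integer entries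
summing to zero (the differential of a cocharacter of `SL_n`). Then points of the adjoint orbit
of `t` of norm at most `r` are achieved by conjugating with elements of `SL_n(ℝ)` of norm
bounded by a constant `C = C(r)`. -/
theorem statement4 {n : ℕ} (hn : 1 ≤ n) (p : Matrix (Fin n) (Fin n) ℝ) (hp : IsUnit p)
    (δ : Fin n → ℤ) (hδ : ∑ i, δ i = 0)
    (t : Matrix (Fin n) (Fin n) ℝ)
    (htdef : t = p * Matrix.diagonal (fun i => (δ i : ℝ)) * p⁻¹) :
    ∀ r : ℝ, 0 < r → ∃ C : ℝ, 0 < C ∧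
      ∀ g : Matrix (Fin n) (Fin n) ℝ, g.det = 1 → ‖g * t * g⁻¹‖ ≤ r →
        ∃ h : Matrix (Fin n) (Fin n) ℝ, h.det = 1 ∧ ‖h‖ ≤ C ∧
          h * t * h⁻¹ = g * t * g⁻¹ := by
  classical
  intro r hr
  have hpd : IsUnit p.det := (Matrix.isUnit_iff_isUnit_det p).mp hp
  set d : Matrix (Fin n) (Fin n) ℝ := Matrix.diagonal (fun i => (δ i : ℝ)) with hd
  set Λ : Finset ℤ := Finset.image δ Finset.univ with hΛdef
  have hδΛ : ∀ i, δ i ∈ Λ := fun i => Finset.mem_image_of_mem δ (Finset.mem_univ i)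
  have hΛne : Λ.Nonempty := ⟨δ ⟨0, hn⟩, hδΛ _⟩
  obtain ⟨B, hB0, hB⟩ := bound_B (n := n) Λ r
  set T := Fintype.piFinset (fun _ : Fin n => Λ) with hTdef
  have hTne : T.Nonempty := Fintype.piFinset_nonempty.2 fun _ => hΛne
  have hNpos : 0 < (T.card : ℝ) := by
    have := Finset.card_pos.mpr hTne
    exact_mod_cast this
  -- choice of similarity witnesses
  set P : (Fin n → ℤ) → Prop := fun f => ∃ S : Matrix (Fin n) (Fin n) ℝ,
    IsUnit S.det ∧ d = S * Matrix.diagonal (fun i => ((f i : ℤ) : ℝ)) * S⁻¹ with hPdef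
  set S : (Fin n → ℤ) → Matrix (Fin n) (Fin n) ℝ :=
    fun f => if h : P f then h.choose else 1 with hSdef
  have hS : ∀ f, P f → IsUnit (S f).det ∧
      d = S f * Matrix.diagonal (fun i => ((f i : ℤ) : ℝ)) * (S f)⁻¹ := by
    intro f hf
    have : S f = hf.choose := by rw [hSdef]; simp [dif_pos hf]
    rw [this]
    exact hf.choose_spec
  set K₁ : ℝ := T.sup' hTne (fun f => ‖(S f)⁻¹‖) with hK₁def
  set K₂ : ℝ := T.sup' hTne (fun f => |(S f).det|) with hK₂def
  have hK₁0 : 0 ≤ K₁ := by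
    obtain ⟨f0, hf0⟩ := hTne
    exact le_trans (norm_nonneg ((S f0)⁻¹))
      (Finset.le_sup' (fun f => ‖(S f)⁻¹‖) hf0)
  have hK₂0 : 0 ≤ K₂ := by
    obtain ⟨f0, hf0⟩ := hTne
    exact le_trans (abs_nonneg ((S f0).det)) (Finset.le_sup' (fun f => |(S f).det|) hf0)
  set c₀ : ℝ := (T.card : ℝ) * (K₂ + 1) * (|p.det| + 1) with hc₀def
  have hc₀pos : 0 < c₀ := by
    apply mul_pos (mul_pos hNpos (by linarith))
    have := abs_nonneg p.det; linarith
  set C : ℝ := (n : ℝ)^3 * (B + 1) * (K₁ + 1) * (1 + c₀) * (‖p⁻¹‖ + 1) + 1 with hCdef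
  have hnpos : (0:ℝ) < (n:ℝ) := by exact_mod_cast hn
  have hprodnn : (0:ℝ) ≤ (n : ℝ)^3 * (B + 1) * (K₁ + 1) * (1 + c₀) * (‖p⁻¹‖ + 1) := by
    have := norm_nonneg (p⁻¹)
    apply mul_nonneg (mul_nonneg (mul_nonneg (mul_nonneg (by positivity) (by linarith))
      (by linarith)) (by linarith)) (by linarith)
  have hCpos : 0 < C := by rw [hCdef]; linarith
  refine ⟨C, hCpos, fun g hg hgr => ?_⟩
  set x : Matrix (Fin n) (Fin n) ℝ := g * t * g⁻¹ with hxdef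
  have hgd : IsUnit g.det := by rw [hg]; exact isUnit_one
  set G : Matrix (Fin n) (Fin n) ℝ := g * p with hGdef
  have hGd : IsUnit G.det := by rw [hGdef, Matrix.det_mul, hg, one_mul]; exact hpd
  have hGu : IsUnit G := (Matrix.isUnit_iff_isUnit_det G).mpr hGd
  have hx : x = G * d * G⁻¹ := by
    rw [hxdef, hGdef, htdef, Matrix.mul_inv_rev g p]
    simp only [Matrix.mul_assoc]
  -- the spectral projections
  set Q : ℤ → Matrix (Fin n) (Fin n) ℝ :=
    fun μ => aeval x (Lagrange.basis Λ (fun ν => (ν : ℝ)) μ) with hQdef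
  have hinj : Set.InjOn (fun ν : ℤ => (ν : ℝ)) ↑Λ := fun a _ b _ hab =>
    Int.cast_injective hab
  have hQsum : ∑ μ ∈ Λ, Q μ = 1 := by
    simp only [hQdef]
    rw [← _root_.map_sum, Lagrange.sum_basis hinj hΛne, _root_.map_one]
  have hQeig : ∀ μ ∈ Λ, x * Q μ = (μ : ℝ) • Q μ := fun μ hμ =>
    key_eigen Λ δ hδΛ x G hGu hx μ hμ
  obtain ⟨f, hfT, hfdet⟩ := det_expand Λ hΛne Q hQsum
  have hfΛ : ∀ i, f i ∈ Λ := fun i => (Fintype.mem_piFinset.mp hfT) i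
  set Df : Matrix (Fin n) (Fin n) ℝ := Matrix.diagonal (fun i => ((f i : ℤ) : ℝ)) with hDfdef
  set H : Matrix (Fin n) (Fin n) ℝ := (Matrix.of fun i j => (Q (f i)) j i)ᵀ with hHdef
  have hHdet : ((T.card : ℝ))⁻¹ ≤ |H.det| := by
    rw [hHdef, Matrix.det_transpose]; exact hfdet
  have hHd0 : H.det ≠ 0 := by
    intro h0; rw [h0, abs_zero] at hHdet
    have : (0:ℝ) < ((T.card : ℝ))⁻¹ := inv_pos.mpr hNpos
    linarith
  have hHu : IsUnit H.det := isUnit_iff_ne_zero.mpr hHd0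
  -- the intertwining relation
  have hxH : x * H = H * Df := by
    ext k i
    have he := congrFun (congrFun (hQeig (f i) (hfΛ i)) k) i
    simp only [Matrix.mul_apply, Matrix.smul_apply, smul_eq_mul] at he
    rw [hDfdef, Matrix.mul_diagonal, Matrix.mul_apply]
    simp only [hHdef, Matrix.transpose_apply, Matrix.of_apply]
    rw [he]
    exact mul_comm _ _
  -- P f holds
  have hPf : P f := by
    refine ⟨G⁻¹ * H, ?_, ?_⟩
    · rw [Matrix.det_mul]
      exact (Matrix.isUnit_nonsing_inv_det G hGd).mul hHu
    · have h1 : x = H * Df * H⁻¹ := by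
        rw [← hxH, Matrix.mul_assoc, Matrix.mul_nonsing_inv _ hHu, Matrix.mul_one]
      have h2 : d = G⁻¹ * x * G := by
        rw [hx]
        rw [Matrix.mul_assoc, Matrix.mul_assoc, Matrix.nonsing_inv_mul _ hGd, Matrix.mul_one,
          ← Matrix.mul_assoc, Matrix.nonsing_inv_mul _ hGd, Matrix.one_mul]
      have hGH : (G⁻¹ * H)⁻¹ = H⁻¹ * G := by
        rw [Matrix.mul_inv_rev G⁻¹ H, Matrix.nonsing_inv_nonsing_inv G hGd]
      rw [← hDfdef, hGH, h2, h1]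
      simp only [Matrix.mul_assoc]
  obtain ⟨hSu, hSd⟩ := hS f hPf
  rw [← hDfdef] at hSd
  -- scaling matrix
  set i₀ : Fin n := ⟨0, hn⟩ with hi₀def
  set c : ℝ := (H.det * ((S f)⁻¹).det * (p⁻¹).det)⁻¹ with hcdef
  have hSid : ((S f)⁻¹).det ≠ 0 := (Matrix.isUnit_nonsing_inv_det (S f) hSu).ne_zero
  have hpid : (p⁻¹).det ≠ 0 := (Matrix.isUnit_nonsing_inv_det p hpd).ne_zero
  have hprod0 : H.det * ((S f)⁻¹).det * (p⁻¹).det ≠ 0 :=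
    mul_ne_zero (mul_ne_zero hHd0 hSid) hpid
  have hc0 : c ≠ 0 := by rw [hcdef]; exact inv_ne_zero hprod0
  set E : Matrix (Fin n) (Fin n) ℝ :=
    Matrix.diagonal (Function.update (fun _ : Fin n => (1:ℝ)) i₀ c) with hEdef
  have hEdet : E.det = c := by
    rw [hEdef, Matrix.det_diagonal]
    rw [Finset.prod_update_of_mem (Finset.mem_univ i₀)]
    simp
  have hEd : E * d = d * E := by
    rw [hd, hEdef, Matrix.diagonal_mul_diagonal, Matrix.diagonal_mul_diagonal]
    have hfun : (fun i => Function.update (fun _ : Fin n => (1:ℝ)) i₀ c i * (δ i : ℝ))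
        = fun i => (δ i : ℝ) * Function.update (fun _ : Fin n => (1:ℝ)) i₀ c i := by
      funext i; ring
    rw [hfun]
  set h : Matrix (Fin n) (Fin n) ℝ := H * (S f)⁻¹ * E * p⁻¹ with hhdef
  have keyfield : ∀ a b e : ℝ, a ≠ 0 → b ≠ 0 → e ≠ 0 → a * b * (a * b * e)⁻¹ * e = 1 := by
    intro a b e ha hb he; field_simp
  have hdeth : h.det = 1 := by
    rw [hhdef, Matrix.det_mul, Matrix.det_mul, Matrix.det_mul, hEdet, hcdef]
    exact keyfield _ _ _ hHd0 hSid hpid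
  refine ⟨h, hdeth, ?_, ?_⟩
  · -- norm bound
    have hHnorm : ‖H‖ ≤ B := by
      rw [Matrix.norm_le_iff (le_of_lt hB0)]
      intro k i
      calc ‖H k i‖ = ‖(Q (f i)) k i‖ := by rw [hHdef]; rfl
        _ ≤ ‖Q (f i)‖ := Matrix.norm_entry_le_entrywise_sup_norm _
        _ ≤ B := hB (f i) (hfΛ i) x hgr
    have hSnorm : ‖(S f)⁻¹‖ ≤ K₁ := Finset.le_sup' (fun f => ‖(S f)⁻¹‖) hfT
    have hSdetb : |(S f).det| ≤ K₂ := Finset.le_sup' (fun f => |(S f).det|) hfT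
    have hdetHinv : |H.det|⁻¹ ≤ (T.card : ℝ) := inv_le_of_inv_le₀ hNpos hHdet
    have hSdinv : |((S f)⁻¹).det| = |(S f).det|⁻¹ := by
      rw [Matrix.det_nonsing_inv, Ring.inverse_eq_inv', abs_inv]
    have hpdinv : |(p⁻¹).det| = |p.det|⁻¹ := by
      rw [Matrix.det_nonsing_inv, Ring.inverse_eq_inv', abs_inv]
    have hcbound : |c| ≤ c₀ := by
      rw [hcdef, abs_inv, abs_mul, abs_mul, hSdinv, hpdinv]
      rw [mul_inv, mul_inv, inv_inv, inv_inv]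
      rw [hc₀def]
      have h1 : 0 < |(S f).det| := abs_pos.mpr hSu.ne_zero
      have h2 : 0 < |p.det| := abs_pos.mpr hpd.ne_zero
      calc |H.det|⁻¹ * |(S f).det| * |p.det|
          ≤ (T.card : ℝ) * |(S f).det| * |p.det| := by
            apply mul_le_mul_of_nonneg_right (mul_le_mul_of_nonneg_right hdetHinv h1.le) h2.le
        _ ≤ (T.card : ℝ) * (K₂ + 1) * (|p.det| + 1) := by
            apply mul_le_mul (mul_le_mul le_rfl (by linarith) h1.le hNpos.le) (by linarith)
              h2.le
            apply mul_nonneg hNpos.le (by linarith)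
    have hEnorm : ‖E‖ ≤ 1 + c₀ := by
      rw [hEdef, Matrix.norm_diagonal]
      rw [pi_norm_le_iff_of_nonneg (by linarith)]
      intro i
      rw [Function.update_apply]
      split_ifs
      · calc ‖c‖ = |c| := rfl
          _ ≤ c₀ := hcbound
          _ ≤ 1 + c₀ := by linarith
      · simp only [norm_one]; linarith
    clear_value K₁ K₂ c₀ C
    have n3 : ‖h‖ ≤ (n:ℝ) * ‖H * (S f)⁻¹ * E‖ * ‖p⁻¹‖ := by
      rw [hhdef]; exact aux_norm_mul _ _
    have hBn : ‖H‖ ≤ B + 1 := by linarith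
    have hK₁n : ‖(S f)⁻¹‖ ≤ K₁ + 1 := by linarith
    have hpn : ‖p⁻¹‖ ≤ ‖p⁻¹‖ + 1 := by linarith
    calc ‖h‖ ≤ (n:ℝ) * ‖H * (S f)⁻¹ * E‖ * ‖p⁻¹‖ := n3
      _ ≤ (n:ℝ) * ((n:ℝ) * ‖H * (S f)⁻¹‖ * ‖E‖) * ‖p⁻¹‖ := by
          gcongr
          exact aux_norm_mul _ _
      _ ≤ (n:ℝ) * ((n:ℝ) * ((n:ℝ) * ‖H‖ * ‖(S f)⁻¹‖) * ‖E‖) * ‖p⁻¹‖ := by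
          gcongr
          exact aux_norm_mul _ _
      _ ≤ (n:ℝ) * ((n:ℝ) * ((n:ℝ) * (B+1) * (K₁+1)) * (1 + c₀)) * (‖p⁻¹‖ + 1) := by
          gcongr
      _ = (n : ℝ)^3 * (B + 1) * (K₁ + 1) * (1 + c₀) * (‖p⁻¹‖ + 1) := by ring
      _ ≤ C := by rw [hCdef]; linarith
  · -- conjugation identity
    have hread : h * t = x * h := by
      have e1 : (S f)⁻¹ * d = Df * (S f)⁻¹ := by
        have hds : d * S f = S f * Df := by
          rw [hSd]
          simp only [Matrix.mul_assoc]
          rw [Matrix.nonsing_inv_mul _ hSu, Matrix.mul_one]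
        calc (S f)⁻¹ * d = (S f)⁻¹ * (d * (S f * (S f)⁻¹)) := by
              rw [Matrix.mul_nonsing_inv _ hSu, Matrix.mul_one]
          _ = (S f)⁻¹ * ((d * S f) * (S f)⁻¹) := by simp only [Matrix.mul_assoc]
          _ = (S f)⁻¹ * ((S f * Df) * (S f)⁻¹) := by rw [hds]
          _ = ((S f)⁻¹ * S f) * (Df * (S f)⁻¹) := by simp only [Matrix.mul_assoc]
          _ = Df * (S f)⁻¹ := by rw [Matrix.nonsing_inv_mul _ hSu, Matrix.one_mul]
      calc h * t = H * ((S f)⁻¹ * (E * (p⁻¹ * (p * (d * p⁻¹))))) := by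
            rw [hhdef, htdef]; simp only [Matrix.mul_assoc]
        _ = H * ((S f)⁻¹ * (E * (d * p⁻¹))) := by
            rw [← Matrix.mul_assoc p⁻¹ p, Matrix.nonsing_inv_mul _ hpd, Matrix.one_mul]
        _ = H * ((S f)⁻¹ * (d * (E * p⁻¹))) := by
            rw [← Matrix.mul_assoc E d, hEd, Matrix.mul_assoc]
        _ = H * (Df * ((S f)⁻¹ * (E * p⁻¹))) := by
            rw [← Matrix.mul_assoc _ d, e1, Matrix.mul_assoc]
        _ = (H * Df) * ((S f)⁻¹ * (E * p⁻¹)) := by simp only [Matrix.mul_assoc]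
        _ = (x * H) * ((S f)⁻¹ * (E * p⁻¹)) := by rw [hxH]
        _ = x * h := by rw [hhdef]; simp only [Matrix.mul_assoc]
    have hhu : IsUnit h.det := by rw [hdeth]; exact isUnit_one
    calc h * t * h⁻¹ = x * h * h⁻¹ := by rw [hread]
      _ = x * (h * h⁻¹) := by rw [Matrix.mul_assoc]
      _ = x := by rw [Matrix.mul_nonsing_inv _ hhu, Matrix.mul_one]
end

section
/- Let n ≥ 1 and let a be a diagonal n×n real matrix with strictly positive diagonal entries and determinant 1. Let w be a nonzero n×n real matrix such that w_{ij} = 0 whenever a_{ii} ≤ a_{jj} (so w lies in the expanding part 𝔤_a⁺ of the adjoint action of a on 𝔰𝔩_n(ℝ)). Then there exists an n×n real matrix m with m_{ij} = 0 whenever a_{ii} ≥ a_{jj}, such that u = 1 + m is invertible (u lies in the contracting horospherical subgroup G_a⁻ of SL_n(ℝ)) and the matrix u w u⁻¹ has a nonzero entry at some position (i,j) with a_{ii} < a_{jj} (that is, u w u⁻¹ does not lie in 𝔤_a⁺ + 𝔤_a⁰). -/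
open Matrix

private lemma unip_aux {R : Type*} [Ring R] (m : R) : (1 + m) * (1 - m) = 1 - m * m := by
  noncomm_ring

private lemma unip_aux' {R : Type*} [Ring R] (m : R) : (1 - m) * (1 + m) = 1 - m * m := by
  noncomm_ring

/-- **Lemma 7.2 (shearing lemma) for the adjoint representation of `SL_n(ℝ)`.**
Let `a` be a positive diagonal matrix of determinant one and `w ≠ 0` a matrix supported on the
expanding positions (`w i j = 0` whenever `a i ≤ a j`).  Then there is a contracting unipotent
element `u = 1 + m` (with `m i j = 0` whenever `a i ≥ a j`) such that `u w u⁻¹` has a nonzero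
entry at a contracting position, i.e. `u w u⁻¹ ∉ 𝔤_a⁺ + 𝔤_a⁰`. -/
theorem statement5 {n : ℕ} (hn : 1 ≤ n) (a : Fin n → ℝ) (ha : ∀ i, 0 < a i)
    (hdet : ∏ i, a i = 1) (w : Matrix (Fin n) (Fin n) ℝ) (hw : w ≠ 0)
    (hwplus : ∀ i j, a i ≤ a j → w i j = 0) :
    ∃ m : Matrix (Fin n) (Fin n) ℝ, (∀ i j, a j ≤ a i → m i j = 0) ∧
      IsUnit (1 + m) ∧
      ∃ i j, a i < a j ∧ ((1 + m) * w * (1 + m)⁻¹) i j ≠ 0 := by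
  -- pick a nonzero entry of w
  obtain ⟨i0, j0, hw0⟩ : ∃ i j, w i j ≠ 0 := by
    by_contra h
    push_neg at h
    exact hw (by ext i j; simp [h])
  have hlt : a j0 < a i0 := by
    by_contra h
    exact hw0 (hwplus i0 j0 (not_lt.mp h))
  have hne : i0 ≠ j0 := fun h => lt_irrefl _ (h ▸ hlt)
  refine ⟨single j0 i0 (1 : ℝ), ?_, ?_, ?_⟩
  · intro i j hij
    simp only [single, of_apply, ite_eq_right_iff, one_ne_zero, imp_false, not_and]
    rintro rfl rfl
    exact absurd hij (not_le.mpr hlt)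
  · have hm2 : single j0 i0 (1 : ℝ) * single j0 i0 (1 : ℝ) = 0 :=
      single_mul_single_of_ne _ _ _ _ hne _
    exact ⟨⟨_, 1 - single j0 i0 (1 : ℝ),
      by rw [unip_aux, hm2, sub_zero], by rw [unip_aux', hm2, sub_zero]⟩, rfl⟩
  · set m := single j0 i0 (1 : ℝ) with hm
    have hm2 : m * m = 0 := by
      rw [hm]; exact single_mul_single_of_ne _ _ _ _ hne _
    have hinv : (1 + m)⁻¹ = 1 - m :=
      inv_eq_right_inv (by rw [unip_aux, hm2, sub_zero])
    refine ⟨j0, i0, hlt, ?_⟩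
    rw [hinv]
    have hexp : (1 + m) * w * (1 - m) = w + m * w - w * m - m * (w * m) := by
      noncomm_ring
    rw [hexp]
    have e1 : w j0 i0 = 0 := hwplus _ _ hlt.le
    have e2 : (m * w) j0 i0 = 0 := by
      rw [hm, single_mul_apply_same]
      simp [hwplus i0 i0 le_rfl]
    have e3 : (w * m) j0 i0 = 0 := by
      rw [hm, mul_single_apply_same]
      simp [hwplus j0 j0 le_rfl]
    have e4 : (m * (w * m)) j0 i0 = w i0 j0 := by
      rw [hm, single_mul_apply_same,
        mul_single_apply_same]
      ring
    simp only [Matrix.sub_apply, Matrix.add_apply, e1, e2, e3, e4]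
    simpa using hw0
end

section
/- Let G be a topological group, H a complex Hilbert space, and π a group homomorphism from G into the group of linear isometric automorphisms (unitary operators) of H such that for every vector f ∈ H the orbit map g ↦ π(g)f is continuous from G to H. Suppose a, u ∈ G satisfy a^n u a^{−n} → e (the identity of G) as n → ∞ along the natural numbers. If f ∈ H satisfies π(a) f = c • f for some complex scalar c with |c| = 1, then π(u) f = f. -/
open Filter Topology

/-- **Mautner phenomenon** (as in the proof of Proposition 3.2): if `π` is a strongly continuous
unitary representation of a topological group `G` on a complex Hilbert space `H`,
`a, u ∈ G` satisfy `aⁿ u a⁻ⁿ → e`, and `f` is an eigenvector of `π a` with unimodular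
eigenvalue, then `f` is fixed by `π u`. -/
theorem statement6 {G : Type*} [Group G] [TopologicalSpace G] [IsTopologicalGroup G]
    {H : Type*} [NormedAddCommGroup H] [InnerProductSpace ℂ H] [CompleteSpace H]
    (π : G →* (H ≃ₗᵢ[ℂ] H))
    (hcont : ∀ f : H, Continuous fun g : G => (π g) f)
    (a u : G) (hconj : Tendsto (fun m : ℕ => a ^ m * u * a⁻¹ ^ m) atTop (𝓝 1))
    (f : H) (c : ℂ) (hc : ‖c‖ = 1) (heig : (π a) f = c • f) :
    (π u) f = f := by
  have hpow : ∀ m : ℕ, (π (a ^ m)) f = c ^ m • f := by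
    intro m
    induction m with
    | zero => simp
    | succ n ih =>
      rw [pow_succ, map_mul]
      rw [show (π (a ^ n) * π a) f = (π (a ^ n)) ((π a) f) from rfl, heig, map_smul, ih,
        smul_smul, pow_succ, mul_comm]
  have hcm : ∀ m : ℕ, (c ^ m : ℂ) ≠ 0 := by
    intro m h
    have : ‖(c : ℂ) ^ m‖ = 1 := by rw [norm_pow, hc, one_pow]
    rw [h] at this; simp at this
  have hinv : ∀ m : ℕ, (π (a⁻¹ ^ m)) f = (c ^ m)⁻¹ • f := by
    intro m
    have hinj : Function.Injective (π (a ^ m)) := (π (a ^ m)).injective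
    apply hinj
    have h1 : (π (a ^ m)) ((π (a⁻¹ ^ m)) f) = (π (a ^ m * a⁻¹ ^ m)) f := by
      rw [map_mul]; rfl
    rw [h1, inv_pow, mul_inv_cancel, map_one]
    rw [map_smul, hpow, smul_smul, inv_mul_cancel₀ (hcm m), one_smul]
    rfl
  have key : ∀ m : ℕ, ‖(π (a ^ m * u * a⁻¹ ^ m)) f - f‖ = ‖(π u) f - f‖ := by
    intro m
    have h1 : (π (a ^ m * u * a⁻¹ ^ m)) f
        = (c ^ m)⁻¹ • (π (a ^ m)) ((π u) f) := by
      rw [map_mul, map_mul]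
      rw [show (π (a ^ m) * π u * π (a⁻¹ ^ m)) f
          = (π (a ^ m)) ((π u) ((π (a⁻¹ ^ m)) f)) from rfl, hinv, map_smul, map_smul]
    rw [h1]
    have h2 : (c ^ m)⁻¹ • (π (a ^ m)) ((π u) f) - f
        = (c ^ m)⁻¹ • ((π (a ^ m)) ((π u) f) - (π (a ^ m)) f) := by
      rw [smul_sub, hpow, smul_smul, inv_mul_cancel₀ (hcm m), one_smul]
    rw [h2, norm_smul, ← map_sub, (π (a ^ m)).norm_map, norm_inv, norm_pow, hc, one_pow,
      inv_one, one_mul]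
  have hlim : Tendsto (fun m : ℕ => ‖(π (a ^ m * u * a⁻¹ ^ m)) f - f‖) atTop (𝓝 0) := by
    have h1 : Tendsto (fun m : ℕ => (π (a ^ m * u * a⁻¹ ^ m)) f) atTop (𝓝 f) := by
      have h := ((hcont f).tendsto 1).comp hconj
      simp only [Function.comp_def, map_one] at h
      exact h
    have h2 : Tendsto (fun m : ℕ => (π (a ^ m * u * a⁻¹ ^ m)) f - f) atTop (𝓝 0) := by
      simpa using h1.sub (tendsto_const_nhds (x := f))
    simpa using h2.norm
  have : ‖(π u) f - f‖ = 0 := by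
    have := hlim.congr (fun m => key m)
    exact tendsto_nhds_unique tendsto_const_nhds this
  have := norm_eq_zero.mp this
  exact sub_eq_zero.mp this
end

section
/- Let K be a field and L a Lie algebra over K. Suppose (g_λ)_{λ∈ℝ} is a family of K-submodules of L such that ⁅x, y⁆ ∈ g_{λ+μ} whenever x ∈ g_λ and y ∈ g_μ, and such that the submodules g_λ together span L (their supremum as submodules is all of L). Then the Lie subalgebra of L generated by the union of the g_λ over all λ ≠ 0 is a Lie ideal of L: for every z ∈ L and every y in this subalgebra, ⁅z, y⁆ again lies in it. -/
/-- **The Auslander ideal.** If a Lie algebra `L` over a field `K` is spanned by submodules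
`g λ` (indexed by Lyapunov weights `λ ∈ ℝ`) satisfying `⁅g λ, g μ⁆ ⊆ g (λ + μ)`, then the Lie
subalgebra generated by the nonzero weight spaces is a Lie ideal of `L`. -/
theorem statement7 {K : Type*} [Field K] {L : Type*} [LieRing L] [LieAlgebra K L]
    (g : ℝ → Submodule K L)
    (hbracket : ∀ (lam mu : ℝ), ∀ x ∈ g lam, ∀ y ∈ g mu, ⁅x, y⁆ ∈ g (lam + mu))
    (hspan : (⨆ lam : ℝ, g lam) = ⊤) :
    ∀ z : L, ∀ y ∈ LieSubalgebra.lieSpan K L (⋃ (lam : ℝ) (_ : lam ≠ 0), (g lam : Set L)),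
      ⁅z, y⁆ ∈ LieSubalgebra.lieSpan K L (⋃ (lam : ℝ) (_ : lam ≠ 0), (g lam : Set L)) := by
  set S : Set L := ⋃ (lam : ℝ) (_ : lam ≠ 0), (g lam : Set L) with hSdef
  set P := LieSubalgebra.lieSpan K L S with hPdef
  have key : ∀ (lam : ℝ), ∀ z ∈ g lam, ∀ y ∈ P, ⁅z, y⁆ ∈ P := by
    intro lam z hz y hy
    by_cases hlam : lam = 0
    · subst hlam
      let Q : LieSubalgebra K L :=
        { carrier := {w | w ∈ P ∧ ⁅z, w⁆ ∈ P}
          add_mem' := fun ha hb =>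
            ⟨P.add_mem ha.1 hb.1, by rw [lie_add]; exact P.add_mem ha.2 hb.2⟩
          zero_mem' := ⟨P.zero_mem, by rw [lie_zero]; exact P.zero_mem⟩
          smul_mem' := fun c a ha =>
            ⟨P.smul_mem c ha.1, by rw [lie_smul]; exact P.smul_mem c ha.2⟩
          lie_mem' := fun {a b} ha hb =>
            ⟨P.lie_mem ha.1 hb.1, by
              rw [leibniz_lie]
              exact P.add_mem (P.lie_mem ha.2 hb.1) (P.lie_mem ha.1 hb.2)⟩ }
      have hSQ : S ⊆ Q := by
        intro w hw
        obtain ⟨mu, hmu, hw'⟩ : ∃ mu : ℝ, mu ≠ 0 ∧ w ∈ g mu := by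
          simpa [hSdef, Set.mem_iUnion] using hw
        have hwP : w ∈ P := LieSubalgebra.subset_lieSpan hw
        have hbw : ⁅z, w⁆ ∈ g mu := by
          have := hbracket 0 mu z hz w hw'
          rwa [zero_add] at this
        refine ⟨hwP, LieSubalgebra.subset_lieSpan ?_⟩
        exact Set.mem_iUnion.2 ⟨mu, Set.mem_iUnion.2 ⟨hmu, hbw⟩⟩
      exact ((LieSubalgebra.lieSpan_le.2 hSQ) hy).2
    · have hzP : z ∈ P :=
        LieSubalgebra.subset_lieSpan (Set.mem_iUnion.2 ⟨lam, Set.mem_iUnion.2 ⟨hlam, hz⟩⟩)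
      exact P.lie_mem hzP hy
  intro z y hy
  have hz : z ∈ ⨆ lam : ℝ, g lam := by rw [hspan]; exact Submodule.mem_top
  refine Submodule.iSup_induction (motive := fun w => ⁅w, y⁆ ∈ P) g hz
    (fun lam w hw => key lam w hw y hy) ?_ ?_
  · show ⁅(0 : L), y⁆ ∈ P
    rw [zero_lie]; exact P.zero_mem
  · intro a b ha hb
    show ⁅a + b, y⁆ ∈ P
    rw [add_lie]; exact P.add_mem ha hb
end
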